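/- For every morphism f : a → b of R, the category of p-factorizations of f — whose objects are triples (Z, u, v) with Z an object of D_R, u : a → p(Z) and v : p(Z) → b morphisms of R satisfying v ∘ u = f, and whose morphisms (Z, u, v) → (Z', u', v') are morphisms t : Z → Z' of D_R with p(t) ∘ u = u' and v' ∘ p(t) = v — is nonempty and connected (any two objects are joined by a finite zig-zag of morphisms). -/

import Mathlib

open CategoryTheory

universe u

namespace Unrolling

/-- A morphism is "an identity" if it is the `eqToHom` of an equality of objects. -/
def IsIdArrow {C : Type*} [Category C] {x y : C} (m : x ⟶ y) : Prop :=
  ∃ h : x = y, m = eqToHom h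

/-- A morphism lies in the image of the functor `F` (up to the evident equalities of objects). -/
def InImg {A C : Type*} [Category A] [Category C] (F : A ⥤ C) {x y : C} (m : x ⟶ y) : Prop :=
  ∃ (a b : A) (k : a ⟶ b) (ha : F.obj a = x) (hb : F.obj b = y),
    m = eqToHom ha.symm ≫ F.map k ≫ eqToHom hb

variable {R₀ R Fs : Type u} [SmallCategory R₀] [SmallCategory R] [SmallCategory Fs]

/-- The free category comonad applied to a functor `c : R₀ ⥤ R`, i.e. the induced functor
between path categories. -/
def freeMap (c : R₀ ⥤ R) : Paths R₀ ⥤ Paths R where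
  obj x := c.obj x
  map f := c.toPrefunctor.mapPath f
  map_id _ := rfl
  map_comp f g := c.toPrefunctor.mapPath_comp f g

/-- A "free isomorphism": the image under `i : Paths R ⥤ F_≃(R)` of a length-one path whose
arrow is an isomorphism of `R`. -/
def FreeIso (i : Paths R ⥤ Fs) {x y : Fs} (m : x ⟶ y) : Prop :=
  ∃ (a b : R) (f : a ⟶ b) (ha : i.obj ((Paths.of R).obj a) = x) (hb : i.obj ((Paths.of R).obj b) = y),
    IsIso f ∧ m = eqToHom ha.symm ≫ i.map ((Paths.of R).map f) ≫ eqToHom hb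

/-- The twisted arrow category of `C`: objects are morphisms of `C`. -/
structure Tw (C : Type*) [Category C] where
  left : C
  right : C
  hom : left ⟶ right

/-- Morphisms `f → f'` in the twisted arrow category: pairs `(u, v)` with `f' = u ≫ f ≫ v`. -/
@[ext]
structure TwHom {C : Type*} [Category C] (X Y : Tw C) where
  u : Y.left ⟶ X.left
  v : X.right ⟶ Y.right
  w : Y.hom = u ≫ X.hom ≫ v

instance {C : Type*} [Category C] : Category (Tw C) where
  Hom := TwHom
  id X := ⟨𝟙 _, 𝟙 _, by simp⟩
  comp {X Y Z} f g := ⟨g.u ≫ f.u, f.v ≫ g.v, by rw [g.w, f.w]; simp⟩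
  id_comp f := by apply TwHom.ext <;> simp [CategoryStruct.id, CategoryStruct.comp]
  comp_id f := by apply TwHom.ext <;> simp [CategoryStruct.id, CategoryStruct.comp]
  assoc f g h := by apply TwHom.ext <;> simp [CategoryStruct.comp]

/-- The defining property of the objects of `D_R` inside the twisted arrow category of
`F_≃(R)`: those morphisms factoring as (identity or image of `R₀`) followed by
(identity or free isomorphism). -/
def InD (i₀ : R₀ ⥤ Fs) (i : Paths R ⥤ Fs) (X : Tw Fs) : Prop :=
  ∃ (z : Fs) (g : X.left ⟶ z) (h : z ⟶ X.right),
    X.hom = g ≫ h ∧ (IsIdArrow g ∨ InImg i₀ g) ∧ (IsIdArrow h ∨ FreeIso i h)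

/-- The category `D_R`, a full subcategory of the twisted arrow category of `F_≃(R)`. -/
abbrev DR (i₀ : R₀ ⥤ Fs) (i : Paths R ⥤ Fs) := ObjectProperty.FullSubcategory (InD i₀ i)

/-- The projection `p : D_R ⥤ R`, sending an object `f : x ⟶ y` to `p₀(y)` and a morphism
`(u, v)` to `p₀(v)`. -/
def pFun (i₀ : R₀ ⥤ Fs) (i : Paths R ⥤ Fs) (p₀ : Fs ⥤ R) : DR i₀ i ⥤ R where
  obj X := p₀.obj X.obj.right
  map {X Y} t := p₀.map (TwHom.v t.hom)
  map_id X := p₀.map_id _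
  map_comp f g := p₀.map_comp _ _

/-- An object of the category of `p`-factorizations of `f : a ⟶ b`: an object `Z` of the
domain of `p` together with a factorization `a ⟶ p(Z) ⟶ b` of `f`. -/
structure PFact {D : Type*} [Category D] {E : Type*} [Category E]
    (p : D ⥤ E) {a b : E} (f : a ⟶ b) where
  Z : D
  u : a ⟶ p.obj Z
  v : p.obj Z ⟶ b
  w : u ≫ v = f

/-- There is a morphism of factorizations `X ⟶ Y`: a morphism `t : X.Z ⟶ Y.Z` compatible with
the structure maps. -/
def PFactRel {D : Type*} [Category D] {E : Type*} [Category E]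
    {p : D ⥤ E} {a b : E} {f : a ⟶ b} (X Y : PFact p f) : Prop :=
  ∃ t : X.Z ⟶ Y.Z, X.u ≫ p.map t = Y.u ∧ p.map t ≫ Y.v = X.v

section Aux

variable (i₀ : R₀ ⥤ Fs) (i : Paths R ⥤ Fs) (p₀ : Fs ⥤ R)

/-- The object of `D_R` given by an identity morphism. -/
def idDR (z : Fs) : DR i₀ i :=
  ⟨⟨z, z, 𝟙 z⟩, z, 𝟙 z, 𝟙 z, by simp, Or.inl ⟨rfl, by simp⟩, Or.inl ⟨rfl, by simp⟩⟩

lemma lemA {a b : R} {f : a ⟶ b} (X : PFact (pFun i₀ i p₀) f) :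
    PFactRel (⟨idDR i₀ i X.Z.obj.right, X.u, X.v, X.w⟩ : PFact (pFun i₀ i p₀) f) X := by
  refine ⟨ObjectProperty.homMk <| show TwHom (idDR i₀ i X.Z.obj.right).obj X.Z.obj from
    ⟨X.Z.obj.hom, 𝟙 _, by simp [idDR]⟩, ?_, ?_⟩
  · show X.u ≫ p₀.map (𝟙 _) = X.u
    rw [p₀.map_id]
    exact Category.comp_id _
  · show p₀.map (𝟙 _) ≫ X.v = X.v
    rw [p₀.map_id]
    exact Category.id_comp _

/-- Every object of `Fs` is in the image of `i`. -/
lemma essSurjObj (c : R₀ ⥤ R)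
    (hcomm : pathComposition R₀ ⋙ i₀ = freeMap c ⋙ i)
    (huniv : ∀ (T : Cat.{u, u}) (q₀ : R₀ ⥤ T) (q : Paths R ⥤ T),
      pathComposition R₀ ⋙ q₀ = freeMap c ⋙ q →
      ∃! d : Fs ⥤ T, i₀ ⋙ d = q₀ ∧ i ⋙ d = q)
    (z : Fs) : ∃ w : Paths R, i.obj w = z := by
  classical
  set P : Fs → Prop := fun z => ∃ w : Paths R, i.obj w = z with hP
  let q : Paths R ⥤ ObjectProperty.FullSubcategory P := ObjectProperty.lift P i (fun w => ⟨w, rfl⟩)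
  let q₀ : R₀ ⥤ ObjectProperty.FullSubcategory P := ObjectProperty.lift P i₀
    (fun x => ⟨(Paths.of R).obj (c.obj x), (Functor.congr_obj hcomm x).symm⟩)
  have hmk : ∀ (A B : ObjectProperty.FullSubcategory P), A.obj = B.obj → A = B := by
    rintro ⟨A, hA⟩ ⟨B, hB⟩ h
    cases h
    rfl
  have hobj : ∀ X, (pathComposition R₀ ⋙ q₀).obj X = (freeMap c ⋙ q).obj X := by
    intro X
    exact hmk _ _ (Functor.congr_obj hcomm X)
  have hcomm' : pathComposition R₀ ⋙ q₀ = freeMap c ⋙ q := by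
    refine CategoryTheory.Functor.ext hobj (fun X Y g => ?_)
    apply (ObjectProperty.ι P).map_injective
    simp only [Functor.map_comp, eqToHom_map]
    exact Functor.congr_hom hcomm g
  obtain ⟨d, ⟨hd0, hd1⟩, -⟩ := huniv (Cat.of (ObjectProperty.FullSubcategory P)) q₀ q hcomm'
  obtain ⟨e, -, heu⟩ := huniv (Cat.of Fs) i₀ i hcomm
  have h1 : d ⋙ ObjectProperty.ι P = 𝟭 Fs := by
    have ha := heu (d ⋙ ObjectProperty.ι P)
      ⟨(Functor.assoc _ _ _).symm.trans ((congrArg (fun G => G ⋙ ObjectProperty.ι P) hd0).trans rfl),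
       (Functor.assoc _ _ _).symm.trans ((congrArg (fun G => G ⋙ ObjectProperty.ι P) hd1).trans rfl)⟩
    have hb := heu (𝟭 Fs) ⟨Functor.comp_id _, Functor.comp_id _⟩
    exact ha.trans hb.symm
  obtain ⟨w, hw⟩ := (d.obj z).property
  exact ⟨w, hw.trans (Functor.congr_obj h1 z)⟩

end Aux

section Main

variable {c : R₀ ⥤ R} {i₀ : R₀ ⥤ Fs} {i : Paths R ⥤ Fs} {p₀ : Fs ⥤ R}

/-- The connectivity chain from an identity-object factorization to the base factorization. -/
lemma idFact_to_base
    (hlift : ∀ {a b : R} (f : a ⟶ b), ∃ (x y : R₀) (k : x ⟶ y)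
      (w : a ≅ c.obj x) (w' : b ≅ c.obj y), w.hom ≫ c.map k = f ≫ w'.hom)
    (hcomm : pathComposition R₀ ⋙ i₀ = freeMap c ⋙ i)
    (hp₁ : i₀ ⋙ p₀ = c) (hp₂ : i ⋙ p₀ = pathComposition R)
    {a b : R} (f : a ⟶ b)
    (z : Fs) (W : R) (hw : i.obj ((Paths.of R).obj W) = z)
    (u : a ⟶ p₀.obj z) (v : p₀.obj z ⟶ b) (huv : u ≫ v = f) :
    Relation.ReflTransGen
      (fun A B : PFact (pFun i₀ i p₀) f => PFactRel A B ∨ PFactRel B A)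
      ⟨idDR i₀ i z, u, v, huv⟩
      ⟨idDR i₀ i (i.obj ((Paths.of R).obj b)),
        f ≫ eqToHom (Functor.congr_obj hp₂ ((Paths.of R).obj b)).symm,
        eqToHom (Functor.congr_obj hp₂ ((Paths.of R).obj b)), by rw [Category.assoc]; erw [eqToHom_trans, eqToHom_refl, Category.comp_id]⟩ := by
  subst hw
  have e : p₀.obj (i.obj ((Paths.of R).obj W)) = W := Functor.congr_obj hp₂ ((Paths.of R).obj W)
  set u' : a ⟶ W := u ≫ eqToHom e with hu'
  set v' : W ⟶ b := eqToHom e.symm ≫ v with hv'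
  have huv' : u' ≫ v' = f := by simp [hu', hv', huv]
  obtain ⟨x, y, k, ω, ω', hωk⟩ := hlift v'
  have hIx : i₀.obj x = i.obj ((Paths.of R).obj (c.obj x)) := Functor.congr_obj hcomm x
  have hIy : i₀.obj y = i.obj ((Paths.of R).obj (c.obj y)) := Functor.congr_obj hcomm y
  have e2 : p₀.obj (i.obj ((Paths.of R).obj (c.obj x))) = c.obj x :=
    Functor.congr_obj hp₂ ((Paths.of R).obj (c.obj x))
  have e2y : p₀.obj (i.obj ((Paths.of R).obj (c.obj y))) = c.obj y :=
    Functor.congr_obj hp₂ ((Paths.of R).obj (c.obj y))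
  have e3 : p₀.obj (i.obj ((Paths.of R).obj b)) = b := Functor.congr_obj hp₂ ((Paths.of R).obj b)
  have hp1x : p₀.obj (i₀.obj x) = c.obj x := Functor.congr_obj hp₁ x
  have hp1y : p₀.obj (i₀.obj y) = c.obj y := Functor.congr_obj hp₁ y
  -- The "M" object : free iso on ω.hom
  have MD : InD i₀ i ⟨i.obj ((Paths.of R).obj W), i.obj ((Paths.of R).obj (c.obj x)), i.map ((Paths.of R).map ω.hom)⟩ :=
    ⟨i.obj ((Paths.of R).obj W), 𝟙 _, i.map ((Paths.of R).map ω.hom), by simp, Or.inl ⟨rfl, by simp⟩,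
      Or.inr ⟨W, c.obj x, ω.hom, rfl, rfl, inferInstance, by simp⟩⟩
  set Mobj : DR i₀ i := ⟨_, MD⟩ with hMobj
  have wM : (u' ≫ ω.hom ≫ eqToHom e2.symm) ≫ (eqToHom e2 ≫ ω.inv ≫ v') = f := by
    simp [huv']
  set Mfact : PFact (pFun i₀ i p₀) f :=
    ⟨Mobj, u' ≫ ω.hom ≫ eqToHom e2.symm, eqToHom e2 ≫ ω.inv ≫ v', wM⟩ with hMfact
  -- p₀ of the single path ω.hom
  have hpM : p₀.map (i.map ((Paths.of R).map ω.hom)) = eqToHom e ≫ ω.hom ≫ eqToHom e2.symm := by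
    have := Functor.congr_hom hp₂ ((Paths.of R).map ω.hom)
    exact this.trans (by erw [pathComposition_map, composePath_toPath]; rfl)
  -- edge 1 : X ⟶ Mfact
  have edge1 : PFactRel (⟨idDR i₀ i (i.obj ((Paths.of R).obj W)), u, v, huv⟩ : PFact (pFun i₀ i p₀) f) Mfact := by
    refine ⟨ObjectProperty.homMk <| show TwHom (idDR i₀ i (i.obj ((Paths.of R).obj W))).obj Mobj.obj from
      ⟨𝟙 _, i.map ((Paths.of R).map ω.hom), by simp [idDR]; rfl⟩, ?_, ?_⟩
    · show u ≫ p₀.map (i.map ((Paths.of R).map ω.hom)) = u' ≫ ω.hom ≫ eqToHom e2.symm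
      rw [hpM, hu']
      simp
    · show p₀.map (i.map ((Paths.of R).map ω.hom)) ≫ (eqToHom e2 ≫ ω.inv ≫ v') = v
      rw [hpM, hv']
      simp
  -- X₃ : identity fact at i (c x)
  set X₃ : PFact (pFun i₀ i p₀) f :=
    ⟨idDR i₀ i (i.obj ((Paths.of R).obj (c.obj x))),
      u' ≫ ω.hom ≫ eqToHom e2.symm, eqToHom e2 ≫ ω.inv ≫ v', wM⟩ with hX₃
  have edge2 : PFactRel X₃ Mfact := lemA i₀ i p₀ Mfact
  -- The "N" object
  set Nhom : i₀.obj x ⟶ i.obj ((Paths.of R).obj b) :=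
    i₀.map k ≫ eqToHom hIy ≫ i.map ((Paths.of R).map ω'.inv) with hNhom
  have ND : InD i₀ i ⟨i₀.obj x, i.obj ((Paths.of R).obj b), Nhom⟩ :=
    ⟨i₀.obj y, i₀.map k, eqToHom hIy ≫ i.map ((Paths.of R).map ω'.inv), by simp [hNhom],
      Or.inr ⟨x, y, k, rfl, rfl, by simp⟩,
      Or.inr ⟨c.obj y, b, ω'.inv, hIy.symm, rfl, inferInstance, by simp⟩⟩
  set Nobj : DR i₀ i := ⟨_, ND⟩ with hNobj
  set Nfact : PFact (pFun i₀ i p₀) f :=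
    ⟨Nobj, f ≫ eqToHom e3.symm, eqToHom e3, by dsimp [pFun]; simp⟩ with hNfact
  -- p₀ computations
  have hpk : p₀.map (i₀.map k) = eqToHom hp1x ≫ c.map k ≫ eqToHom hp1y.symm := by
    have := Functor.congr_hom hp₁ k
    exact this.trans (by simp)
  have hpω' : p₀.map (i.map ((Paths.of R).map ω'.inv)) = eqToHom e2y ≫ ω'.inv ≫ eqToHom e3.symm := by
    have := Functor.congr_hom hp₂ ((Paths.of R).map ω'.inv)
    exact this.trans (by erw [pathComposition_map, composePath_toPath]; rfl)
  have hpN : p₀.map Nhom = eqToHom hp1x ≫ c.map k ≫ ω'.inv ≫ eqToHom e3.symm := by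
    rw [hNhom]
    simp only [Functor.map_comp, hpk, hpω', eqToHom_map]
    simp
  have hckv : c.map k ≫ ω'.inv = ω.inv ≫ v' := by
    have : v' = ω.hom ≫ c.map k ≫ ω'.inv := by
      rw [← Category.assoc, hωk]
      simp
    rw [this]
    simp
  -- edge 3 : X₃ ⟶ Nfact
  have edge3 : PFactRel X₃ Nfact := by
    refine ⟨ObjectProperty.homMk <| show TwHom (idDR i₀ i (i.obj ((Paths.of R).obj (c.obj x)))).obj Nobj.obj from
      ⟨eqToHom hIx, eqToHom hIx.symm ≫ Nhom, by simp [idDR]; rfl⟩, ?_, ?_⟩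
    · show (u' ≫ ω.hom ≫ eqToHom e2.symm) ≫ p₀.map (eqToHom hIx.symm ≫ Nhom) =
        f ≫ eqToHom e3.symm
      rw [Functor.map_comp, eqToHom_map, hpN]
      have h5 : ω.hom ≫ c.map k ≫ ω'.inv ≫ eqToHom e3.symm = v' ≫ eqToHom e3.symm := by
        rw [← Category.assoc ω.hom, ← Category.assoc, hωk]
        simp
      simp only [Category.assoc, eqToHom_trans, eqToHom_trans_assoc, eqToHom_refl,
        Category.id_comp]
      rw [h5, ← huv']
      simp
    · show p₀.map (eqToHom hIx.symm ≫ Nhom) ≫ eqToHom e3 = eqToHom e2 ≫ ω.inv ≫ v'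
      rw [Functor.map_comp, eqToHom_map, hpN, ← hckv]
      simp
  -- edge 4 : base ⟶ Nfact
  have edge4 : PFactRel
      (⟨idDR i₀ i (i.obj ((Paths.of R).obj b)), f ≫ eqToHom e3.symm, eqToHom e3, by rw [Category.assoc]; erw [eqToHom_trans, eqToHom_refl, Category.comp_id]⟩ :
        PFact (pFun i₀ i p₀) f) Nfact := lemA i₀ i p₀ Nfact
  -- assemble
  refine Relation.ReflTransGen.head (Or.inl edge1) ?_
  refine Relation.ReflTransGen.head (Or.inr edge2) ?_
  refine Relation.ReflTransGen.head (Or.inl edge3) ?_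
  exact Relation.ReflTransGen.single (Or.inr edge4)

end Main

/-- In the situation of the unrolling construction, for every morphism
`f : a ⟶ b` of `R`, the category of `p`-factorizations of `f` is nonempty and connected:
any two factorizations are joined by a finite zig-zag of morphisms of factorizations. -/
theorem factorizations_nonempty_connected
    (c : R₀ ⥤ R)
    (hlift : ∀ {a b : R} (f : a ⟶ b), ∃ (x y : R₀) (k : x ⟶ y)
      (w : a ≅ c.obj x) (w' : b ≅ c.obj y), w.hom ≫ c.map k = f ≫ w'.hom)
    (i₀ : R₀ ⥤ Fs) (i : Paths R ⥤ Fs)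
    (hcomm : pathComposition R₀ ⋙ i₀ = freeMap c ⋙ i)
    (huniv : ∀ (T : Cat.{u, u}) (q₀ : R₀ ⥤ T) (q : Paths R ⥤ T),
      pathComposition R₀ ⋙ q₀ = freeMap c ⋙ q →
      ∃! d : Fs ⥤ T, i₀ ⋙ d = q₀ ∧ i ⋙ d = q)
    (p₀ : Fs ⥤ R) (hp₁ : i₀ ⋙ p₀ = c) (hp₂ : i ⋙ p₀ = pathComposition R)
    {a b : R} (f : a ⟶ b) :
    Nonempty (PFact (pFun i₀ i p₀) f) ∧
    ∀ X Y : PFact (pFun i₀ i p₀) f,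
      Relation.ReflTransGen (fun A B => PFactRel A B ∨ PFactRel B A) X Y := by
  classical
  set Q : PFact (pFun i₀ i p₀) f :=
    ⟨idDR i₀ i (i.obj ((Paths.of R).obj b)),
      f ≫ eqToHom (Functor.congr_obj hp₂ ((Paths.of R).obj b)).symm,
      eqToHom (Functor.congr_obj hp₂ ((Paths.of R).obj b)), by rw [Category.assoc]; erw [eqToHom_trans, eqToHom_refl, Category.comp_id]⟩ with hQ
  have key : ∀ X : PFact (pFun i₀ i p₀) f,
      Relation.ReflTransGen (fun A B => PFactRel A B ∨ PFactRel B A) X Q := by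
    intro X
    refine Relation.ReflTransGen.head (Or.inr (lemA i₀ i p₀ X)) ?_
    obtain ⟨wz, hwz⟩ := essSurjObj i₀ i c hcomm huniv X.Z.obj.right
    exact idFact_to_base hlift hcomm hp₁ hp₂ f _ wz hwz X.u X.v X.w
  refine ⟨⟨Q⟩, fun X Y => ?_⟩
  have hsymm : Symmetric (fun A B : PFact (pFun i₀ i p₀) f => PFactRel A B ∨ PFactRel B A) :=
    fun A B h => h.elim Or.inr Or.inl
  exact (key X).trans (Std.Symm.symm (self := @Relation.ReflTransGen.stdSymm _ _ ⟨fun _ _ h => hsymm h⟩) _ _ (key Y))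

end Unrolling
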